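/- Consider the control system ẋ₁ = u(t), ẋ₂ = 4u(t)² − 3u(t)³, ẋ₃ = (x₁ − x₂)², with x₁(0) = x₂(0) = x₃(0) = x₃(1) = 0 and u(t) ∈ U = {−1, 1/3, 1, 3} a.e. on [0,1]. Then every admissible trajectory satisfies u(t) ∈ {1/3, 1} for a.e. t (for any control u realizing it), x₁ = x₂ identically, and x₁(1) ≥ 1/3. Here (x₁,x₂,x₃) is admissible if there exists a measurable u: [0,1] → ℝ with u(t) ∈ U a.e. such that x₁(t) = ∫₀ᵗ u, x₂(t) = ∫₀ᵗ (4u² − 3u³), x₃(t) = ∫₀ᵗ (x₁ − x₂)², and x₃(1) = 0. -/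

import Mathlib

open MeasureTheory Set intervalIntegral Filter Topology

noncomputable section

/-- The control `u` realizes the trajectory `(x₁,x₂,x₃)` of the system of Example 4:
`ẋ₁ = u`, `ẋ₂ = 4u² − 3u³`, `ẋ₃ = (x₁ − x₂)²`, `u(t) ∈ {−1, 1/3, 1, 3}` a.e.,
`x₁(0) = x₂(0) = x₃(0) = x₃(1) = 0`. -/
def RealizesEx4 (u x₁ x₂ x₃ : ℝ → ℝ) : Prop :=
  Measurable u ∧
  (∀ᵐ t ∂(volume.restrict (Icc (0:ℝ) 1)),
    u t ∈ ({-1, 1/3, 1, 3} : Set ℝ)) ∧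
  (∀ t ∈ Icc (0:ℝ) 1, x₁ t = ∫ s in (0:ℝ)..t, u s) ∧
  (∀ t ∈ Icc (0:ℝ) 1, x₂ t = ∫ s in (0:ℝ)..t, (4 * u s ^ 2 - 3 * u s ^ 3)) ∧
  (∀ t ∈ Icc (0:ℝ) 1, x₃ t = ∫ s in (0:ℝ)..t, (x₁ s - x₂ s) ^ 2) ∧
  x₃ 1 = 0

/-- **Example 4:** every admissible trajectory of the system satisfies `x₁ = x₂`,
any realizing control takes only the values `1/3` and `1` a.e., and `x₁(1) ≥ 1/3`. -/
theorem example_four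
    (u x₁ x₂ x₃ : ℝ → ℝ) (h : RealizesEx4 u x₁ x₂ x₃) :
    (∀ t ∈ Icc (0:ℝ) 1, x₁ t = x₂ t) ∧
    (∀ᵐ t ∂(volume.restrict (Icc (0:ℝ) 1)), u t = 1/3 ∨ u t = 1) ∧
    1/3 ≤ x₁ 1 := by
  obtain ⟨hum, hU, hx1, hx2, hx3, hx31⟩ := h
  set μ := volume.restrict (Icc (0:ℝ) 1) with hμdef
  set v : ℝ → ℝ := fun s => 4 * u s ^ 2 - 3 * u s ^ 3 with hvdef
  set f : ℝ → ℝ := fun s => u s - v s with hfdef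
  have hvm : Measurable v := ((hum.pow_const 2).const_mul 4).sub ((hum.pow_const 3).const_mul 3)
  have hfm : Measurable f := hum.sub hvm
  -- a.e. bounds
  have hU' : ∀ᵐ t ∂μ, u t = -1 ∨ u t = 1/3 ∨ u t = 1 ∨ u t = 3 := by
    filter_upwards [hU] with t ht
    simpa [Set.mem_insert_iff, Set.mem_singleton_iff] using ht
  have hbu : ∀ᵐ t ∂μ, ‖u t‖ ≤ 3 := by
    filter_upwards [hU'] with t ht
    rcases ht with h1 | h1 | h1 | h1 <;> rw [h1] <;> norm_num [Real.norm_eq_abs, abs_le]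
  have hbv : ∀ᵐ t ∂μ, ‖v t‖ ≤ 45 := by
    filter_upwards [hU'] with t ht
    rcases ht with h1 | h1 | h1 | h1 <;>
      simp only [hvdef, h1] <;> rw [Real.norm_eq_abs, abs_le] <;> norm_num
  have hbf : ∀ᵐ t ∂μ, ‖f t‖ ≤ 48 := by
    filter_upwards [hU'] with t ht
    rcases ht with h1 | h1 | h1 | h1 <;>
      simp only [hfdef, hvdef, h1] <;> rw [Real.norm_eq_abs, abs_le] <;> norm_num
  -- integrability
  have hui : IntegrableOn u (Icc (0:ℝ) 1) volume :=
    Integrable.mono' (integrable_const 3) hum.aestronglyMeasurable hbu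
  have hvi : IntegrableOn v (Icc (0:ℝ) 1) volume :=
    Integrable.mono' (integrable_const 45) hvm.aestronglyMeasurable hbv
  have hfi : IntegrableOn f (Icc (0:ℝ) 1) volume :=
    Integrable.mono' (integrable_const 48) hfm.aestronglyMeasurable hbf
  have hsub : ∀ t ∈ Icc (0:ℝ) 1, uIcc (0:ℝ) t ⊆ Icc (0:ℝ) 1 := by
    intro t ht
    rw [uIcc_of_le ht.1]
    exact Icc_subset_Icc le_rfl ht.2
  set g : ℝ → ℝ := fun t => ∫ s in (0:ℝ)..t, f s with hgdef
  have hgx : ∀ t ∈ Icc (0:ℝ) 1, x₁ t - x₂ t = g t := by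
    intro t ht
    rw [hx1 t ht, hx2 t ht, hgdef]
    exact (intervalIntegral.integral_sub
      (hui.mono_set (hsub t ht)).intervalIntegrable
      (hvi.mono_set (hsub t ht)).intervalIntegrable).symm
  -- continuity of g on [0,1]
  have hgc : ContinuousOn g (Icc (0:ℝ) 1) := by
    have := intervalIntegral.continuousOn_primitive_interval
      (a := (0:ℝ)) (b := (1:ℝ)) (μ := volume) (f := f)
      (by rw [uIcc_of_le zero_le_one]; exact hfi)
    rwa [uIcc_of_le zero_le_one] at this
  -- (x₁ - x₂)² integrates to zero on [0,1]
  have hx3int : ∫ s in (0:ℝ)..1, (x₁ s - x₂ s) ^ 2 = 0 := by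
    rw [← hx3 1 ⟨zero_le_one, le_rfl⟩]; exact hx31
  have hsqi : IntervalIntegrable (fun s => (x₁ s - x₂ s) ^ 2) volume 0 1 := by
    rw [intervalIntegrable_iff_integrableOn_Ioc_of_le zero_le_one]
    have hgi : IntegrableOn (fun s => (g s) ^ 2) (Icc (0:ℝ) 1) volume :=
      ((hgc.pow 2).integrableOn_Icc)
    have : IntegrableOn (fun s => (x₁ s - x₂ s) ^ 2) (Icc (0:ℝ) 1) volume := by
      refine hgi.congr_fun (fun s hs => ?_) measurableSet_Icc
      rw [hgx s hs]
    exact this.mono_set Ioc_subset_Icc_self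
  have hsq0 : (fun s => (x₁ s - x₂ s) ^ 2) =ᵐ[volume.restrict (Ioc (0:ℝ) 1)] 0 := by
    refine (intervalIntegral.integral_eq_zero_iff_of_le_of_nonneg_ae zero_le_one ?_ hsqi).mp hx3int
    exact Eventually.of_forall fun s => sq_nonneg _
  have hIocIcc : volume.restrict (Icc (0:ℝ) 1) = volume.restrict (Ioc (0:ℝ) 1) :=
    (Measure.restrict_congr_set Ioc_ae_eq_Icc).symm
  have hgae : g =ᵐ[volume.restrict (Icc (0:ℝ) 1)] (fun _ => 0) := by
    rw [hIocIcc]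
    filter_upwards [hsq0, ae_restrict_mem measurableSet_Ioc] with s hs hmem
    have hx : x₁ s - x₂ s = 0 := sq_eq_zero_iff.mp (by simpa using hs)
    rw [← hgx s (Ioc_subset_Icc_self hmem), hx]
  have hg0 : ∀ t ∈ Icc (0:ℝ) 1, g t = 0 :=
    fun t ht => Measure.eqOn_Icc_of_ae_eq volume (zero_ne_one) hgae hgc continuousOn_const ht
  -- first conclusion
  have hx12 : ∀ t ∈ Icc (0:ℝ) 1, x₁ t = x₂ t := by
    intro t ht
    have := hgx t ht
    rw [hg0 t ht] at this
    linarith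
  -- f = 0 a.e. on [0,1]
  have hfiμ : Integrable f μ := hfi
  set ν₁ : Measure ℝ := μ.withDensity (fun t => ENNReal.ofReal (f t)) with hν₁def
  set ν₂ : Measure ℝ := μ.withDensity (fun t => ENNReal.ofReal (-(f t))) with hν₂def
  haveI hfin₁ : IsFiniteMeasure ν₁ := isFiniteMeasure_withDensity_ofReal hfiμ.hasFiniteIntegral
  haveI hfin₂ : IsFiniteMeasure ν₂ := isFiniteMeasure_withDensity_ofReal hfiμ.neg.hasFiniteIntegral
  have hν : ν₁ = ν₂ := by
    refine Measure.ext_of_Iic ν₁ ν₂ (fun b => ?_)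
    have hrr : μ.restrict (Iic b) = volume.restrict (Iic b ∩ Icc (0:ℝ) 1) := by
      rw [hμdef, Measure.restrict_restrict measurableSet_Iic]
    have hint0 : ∫ t, f t ∂(μ.restrict (Iic b)) = 0 := by
      rcases lt_or_ge b 0 with hb | hb
      · have he : Iic b ∩ Icc (0:ℝ) 1 = ∅ := by
          ext x
          simp only [mem_inter_iff, mem_Iic, mem_Icc, mem_empty_iff_false, iff_false, not_and]
          intro h1 h2
          linarith
        rw [hrr, he, Measure.restrict_empty, integral_zero_measure]
      · have hmem : min b 1 ∈ Icc (0:ℝ) 1 := ⟨le_min hb zero_le_one, min_le_right _ _⟩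
        have hset : Iic b ∩ Icc (0:ℝ) 1 = Icc 0 (min b 1) := by
          ext x
          simp only [mem_inter_iff, mem_Iic, mem_Icc, le_min_iff]
          tauto
        have : ∫ t, f t ∂(volume.restrict (Icc 0 (min b 1))) = g (min b 1) := by
          show ∫ t in Icc 0 (min b 1), f t = ∫ s in (0:ℝ)..(min b 1), f s
          rw [intervalIntegral.integral_of_le hmem.1, integral_Icc_eq_integral_Ioc]
        rw [hrr, hset, this, hg0 _ hmem]
    have hi' : Integrable f (μ.restrict (Iic b)) := hfiμ.restrict
    have heq := integral_eq_lintegral_pos_part_sub_lintegral_neg_part hi'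
    rw [hint0] at heq
    have e1 : ν₁ (Iic b) = ∫⁻ a, ENNReal.ofReal (f a) ∂(μ.restrict (Iic b)) :=
      withDensity_apply _ measurableSet_Iic
    have e2 : ν₂ (Iic b) = ∫⁻ a, ENNReal.ofReal (-(f a)) ∂(μ.restrict (Iic b)) :=
      withDensity_apply _ measurableSet_Iic
    have h1 : (∫⁻ a, ENNReal.ofReal (f a) ∂(μ.restrict (Iic b))) ≠ ⊤ := by
      rw [← e1]; exact measure_ne_top ν₁ _
    have h2 : (∫⁻ a, ENNReal.ofReal (-(f a)) ∂(μ.restrict (Iic b))) ≠ ⊤ := by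
      rw [← e2]; exact measure_ne_top ν₂ _
    rw [e1, e2]
    have : (∫⁻ a, ENNReal.ofReal (f a) ∂(μ.restrict (Iic b))).toReal =
        (∫⁻ a, ENNReal.ofReal (-(f a)) ∂(μ.restrict (Iic b))).toReal := by linarith
    exact (ENNReal.toReal_eq_toReal_iff' h1 h2).mp this
  -- deduce f = 0 a.e.
  have hP : μ {t | 0 < f t} = 0 := by
    set P : Set ℝ := {t | 0 < f t} with hPdef
    have hPm : MeasurableSet P := measurableSet_lt measurable_const hfm
    have h2 : ν₂ P = 0 := by
      rw [hν₂def, withDensity_apply _ hPm]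
      have hz : ∀ᵐ t ∂(μ.restrict P), ENNReal.ofReal (-(f t)) = 0 := by
        filter_upwards [ae_restrict_mem hPm] with t ht
        exact ENNReal.ofReal_eq_zero.mpr (by simp only [hPdef, mem_setOf_eq] at ht; linarith)
      rw [lintegral_congr_ae hz, lintegral_zero]
    have h1 : ν₁ P = 0 := by rw [hν]; exact h2
    rw [hν₁def, withDensity_apply _ hPm] at h1
    have hz := (lintegral_eq_zero_iff hfm.ennreal_ofReal).mp h1
    have hz' : ∀ᵐ t ∂μ, t ∉ P := by
      have h' := (ae_restrict_iff' hPm).mp hz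
      filter_upwards [h'] with t ht htP
      have h0 := ht htP
      simp only [Pi.zero_apply, ENNReal.ofReal_eq_zero] at h0
      have : 0 < f t := htP
      linarith
    exact measure_eq_zero_iff_ae_notMem.mpr hz'
  have hN : μ {t | f t < 0} = 0 := by
    set N : Set ℝ := {t | f t < 0} with hNdef
    have hNm : MeasurableSet N := measurableSet_lt hfm measurable_const
    have h1 : ν₁ N = 0 := by
      rw [hν₁def, withDensity_apply _ hNm]
      have hz : ∀ᵐ t ∂(μ.restrict N), ENNReal.ofReal (f t) = 0 := by
        filter_upwards [ae_restrict_mem hNm] with t ht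
        exact ENNReal.ofReal_eq_zero.mpr (by simp only [hNdef, mem_setOf_eq] at ht; linarith)
      rw [lintegral_congr_ae hz, lintegral_zero]
    have h2 : ν₂ N = 0 := by rw [← hν]; exact h1
    rw [hν₂def, withDensity_apply _ hNm] at h2
    have hz := (lintegral_eq_zero_iff hfm.neg.ennreal_ofReal).mp h2
    have hz' : ∀ᵐ t ∂μ, t ∉ N := by
      have h' := (ae_restrict_iff' hNm).mp hz
      filter_upwards [h'] with t ht htN
      have h0 := ht htN
      simp only [Pi.zero_apply, ENNReal.ofReal_eq_zero] at h0
      have : f t < 0 := htN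
      have h0' : -(f t) ≤ 0 := h0
      linarith
    exact measure_eq_zero_iff_ae_notMem.mpr hz'
  have hf0 : ∀ᵐ t ∂μ, f t = 0 := by
    rw [ae_iff]
    refine measure_mono_null (fun t ht => ?_) (measure_union_null hP hN)
    simp only [mem_setOf_eq] at ht ⊢
    rcases lt_trichotomy (f t) 0 with h1 | h1 | h1
    · exact Or.inr h1
    · exact absurd h1 ht
    · exact Or.inl h1
  -- second conclusion
  have huval : ∀ᵐ t ∂μ, u t = 1/3 ∨ u t = 1 := by
    filter_upwards [hU', hf0] with t htU htf
    simp only [hfdef, hvdef] at htf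
    rcases htU with h1 | h1 | h1 | h1
    · rw [h1] at htf; norm_num at htf
    · exact Or.inl h1
    · exact Or.inr h1
    · rw [h1] at htf; norm_num at htf
  -- third conclusion
  have hx11 : 1/3 ≤ x₁ 1 := by
    rw [hx1 1 ⟨zero_le_one, le_rfl⟩, intervalIntegral.integral_of_le zero_le_one]
    have hmono : ∀ᵐ t ∂(volume.restrict (Ioc (0:ℝ) 1)), (fun _ => (1/3:ℝ)) t ≤ u t := by
      have := ae_restrict_of_ae_restrict_of_subset Ioc_subset_Icc_self huval
      filter_upwards [this] with t ht
      rcases ht with h1 | h1 <;> rw [h1] <;> norm_num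
    have hint : (∫ t in Ioc (0:ℝ) 1, (1/3:ℝ)) ≤ ∫ t in Ioc (0:ℝ) 1, u t :=
      integral_mono_ae (integrable_const _) (hui.mono_set Ioc_subset_Icc_self) hmono
    have hc : (∫ t in Ioc (0:ℝ) 1, (1/3:ℝ)) = 1/3 := by
      rw [setIntegral_const]
      simp [Real.volume_Ioc]
    linarith
  exact ⟨hx12, huval, hx11⟩
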